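/- arXiv:0809.3725 — 6 statements merged into one kernel-verified Lean document; each statement's English description precedes it below -/
import Mathlib

section
/- If a universal cycle for k-subsets of [n] exists (a cyclic sequence over [n] in which every k-subset appears exactly once as a window of k consecutive entries), then n divides the binomial coefficient C(n,k). -/
/-- An `(n,k)`-universal cycle: a cyclic sequence of length `C(n,k)` over the
alphabet `Fin n` in which every `k`-subset of `Fin n` appears exactly once as the
set of entries of a window of `k` consecutive positions. -/
def IsUcycle (n k : ℕ) (S : ZMod (n.choose k) → Fin n) : Prop :=
  ∀ A : Finset (Fin n), A.card = k →
    ∃! i : ZMod (n.choose k),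
      (Finset.univ.image fun j : Fin k => S (i + (j : ℕ))) = A

theorem ucycle_exists_imp_dvd (n k : ℕ) (hk : 0 < k) (hkn : k ≤ n)
    (h : ∃ S : ZMod (n.choose k) → Fin n, IsUcycle n k S) :
    n ∣ n.choose k := by
  classical
  obtain ⟨S, hS⟩ := h
  have hn : 0 < n := hk.trans_le hkn
  have hNpos : 0 < n.choose k := Nat.choose_pos hkn
  haveI : NeZero (n.choose k) := ⟨hNpos.ne'⟩
  set W : ZMod (n.choose k) → Finset (Fin n) :=
    fun i => Finset.univ.image fun j : Fin k => S (i + (j : ℕ)) with hWdef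
  -- the map sending a k-subset to its unique window start
  let f : {A : Finset (Fin n) // A.card = k} → ZMod (n.choose k) :=
    fun A => (hS A.1 A.2).choose
  have hfW : ∀ A, W (f A) = A.1 := fun A => (hS A.1 A.2).choose_spec.1
  have hfinj : Function.Injective f := by
    intro A B hAB
    ext1
    rw [← hfW A, ← hfW B, hAB]
  have hcard : Fintype.card {A : Finset (Fin n) // A.card = k} = n.choose k := by
    simp [Fintype.card_finset_len]
  have hfbij : Function.Bijective f :=
    (Fintype.bijective_iff_injective_and_card f).2 ⟨hfinj, by simp [hcard, ZMod.card]⟩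
  -- every window has k distinct entries
  have hWk : ∀ i, (W i).card = k := by
    intro i
    obtain ⟨A, rfl⟩ := hfbij.2 i
    rw [hfW]; exact A.2
  have hinj : ∀ i : ZMod (n.choose k),
      Function.Injective fun j : Fin k => S (i + (j : ℕ)) := by
    intro i
    have h1 : (W i).card = (Finset.univ : Finset (Fin k)).card := by
      simp [hWk i]
    have h2 := Finset.injOn_of_card_image_eq (f := fun j : Fin k => S (i + (j : ℕ)))
      (s := Finset.univ) h1
    intro a b hab
    exact h2 (Finset.mem_coe.2 (Finset.mem_univ a)) (Finset.mem_coe.2 (Finset.mem_univ b)) hab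
  -- multiplicity of each symbol, and subset-membership count
  set m : Fin n → ℕ :=
    fun x => ∑ p : ZMod (n.choose k), if S p = x then 1 else 0 with hmdef
  set c : Fin n → ℕ :=
    fun x => ∑ A : {A : Finset (Fin n) // A.card = k}, if x ∈ A.1 then 1 else 0 with hcdef
  -- double counting: k * m x = c x
  have key1 : ∀ x : Fin n, k * m x = c x := by
    intro x
    have step1 : ∀ j : Fin k,
        (∑ i : ZMod (n.choose k), if S (i + (j : ℕ)) = x then 1 else 0) = m x := by
      intro j
      rw [hmdef]
      exact Fintype.sum_equiv (Equiv.addRight ((j : ℕ) : ZMod (n.choose k)))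
        _ _ (fun i => rfl)
    have step2 : ∀ i : ZMod (n.choose k),
        (∑ j : Fin k, if S (i + (j : ℕ)) = x then 1 else 0)
          = if x ∈ W i then 1 else 0 := by
      intro i
      rw [Finset.sum_boole]
      have himg : ((Finset.univ.filter fun j : Fin k => S (i + (j : ℕ)) = x).image
          fun j : Fin k => S (i + (j : ℕ))) = (W i).filter (· = x) := by
        rw [hWdef, Finset.filter_image]
      have hc : (Finset.univ.filter fun j : Fin k => S (i + (j : ℕ)) = x).card
          = ((W i).filter (· = x)).card := by
        rw [← himg, Finset.card_image_of_injective _ (hinj i)]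
      rw [hc, Finset.filter_eq']
      split_ifs with hx
      · simp
      · simp
    have T1 : (∑ i : ZMod (n.choose k), ∑ j : Fin k,
        if S (i + (j : ℕ)) = x then 1 else 0) = k * m x := by
      rw [Finset.sum_comm]
      rw [Finset.sum_congr rfl (fun j _ => step1 j)]
      simp [mul_comm]
    have T2 : (∑ i : ZMod (n.choose k), ∑ j : Fin k,
        if S (i + (j : ℕ)) = x then 1 else 0) = c x := by
      rw [Finset.sum_congr rfl (fun i _ => step2 i)]
      rw [hcdef]
      refine (Fintype.sum_bijective f hfbij _ _ ?_).symm
      intro A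
      rw [hfW A]
    rw [← T1, T2]
  -- symmetry: c is constant
  have key2 : ∀ x y : Fin n, c x = c y := by
    intro x y
    rw [hcdef]
    set σ : Fin n ≃ Fin n := Equiv.swap x y with hσ
    have hEcard : ∀ A : Finset (Fin n), A.card = k ↔ (A.map σ.toEmbedding).card = k := by
      intro A; rw [Finset.card_map]
    let E : {A : Finset (Fin n) // A.card = k} ≃ {A : Finset (Fin n) // A.card = k} :=
      (Equiv.finsetCongr σ).subtypeEquiv (by intro A; simp only [Equiv.finsetCongr_apply]; exact hEcard A)
    refine Fintype.sum_equiv E _ _ ?_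
    intro A
    have : x ∈ A.1 ↔ y ∈ (E A).1 := by
      have : (E A).1 = A.1.map σ.toEmbedding := rfl
      rw [this]
      constructor
      · intro hx
        have := Finset.mem_map_of_mem σ.toEmbedding hx
        simpa [hσ, Equiv.swap_apply_left] using this
      · intro hy
        rw [Finset.mem_map] at hy
        obtain ⟨a, ha, hay⟩ := hy
        have hax : a = x := σ.injective (by
          show σ a = σ x
          rw [hσ, Equiv.swap_apply_left]
          exact hay)
        rwa [← hax]
    simp [this]
  -- total count
  have total : (∑ x : Fin n, m x) = n.choose k := by
    rw [hmdef, Finset.sum_comm]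
    have : ∀ p : ZMod (n.choose k), (∑ x : Fin n, if S p = x then 1 else 0) = 1 := by
      intro p
      simp
    rw [Finset.sum_congr rfl (fun p _ => this p)]
    simp [ZMod.card]
  -- m is constant
  let x0 : Fin n := ⟨0, hn⟩
  have hmconst : ∀ x : Fin n, m x = m x0 := by
    intro x
    have := (key1 x).trans ((key2 x x0).trans (key1 x0).symm)
    exact Nat.eq_of_mul_eq_mul_left hk this
  refine ⟨m x0, ?_⟩
  rw [← total, Finset.sum_congr rfl (fun x _ => hmconst x)]
  simp [mul_comm]
end

section
/- If the form of a k-subset S of Z/nZ has at least one entry occurring exactly once (a 'good' form), then the orbit of S under translation by Z/nZ has exactly n elements; i.e., all n translates S + c (c ∈ Z/nZ) are distinct. -/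
/-- The cyclic gap of `S ⊆ ℤ/nℤ` at a point `x`: the least positive `d` with
`x + d ∈ S`.  The form of `S` is the cyclic sequence of gaps at its elements. -/
noncomputable def gap {n : ℕ} (S : Finset (ZMod n)) (x : ZMod n) : ℕ :=
  sInf {d : ℕ | 0 < d ∧ x + (d : ZMod n) ∈ S}

/-- If the form of a `k`-subset `S` of `ℤ/nℤ` has an entry occurring exactly once
(a good form), then all `n` translates of `S` are distinct, i.e. the translation
orbit of `S` has exactly `n` elements. -/
theorem good_form_n_translates (n k : ℕ) [NeZero n] (S : Finset (ZMod n))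
    (hcard : S.card = k)
    (hgood : ∃ s ∈ S, ∀ s' ∈ S, gap S s' = gap S s → s' = s) :
    (Finset.univ.image fun c : ZMod n => S.image (· + c)).card = n := by
  obtain ⟨s, hs, hu⟩ := hgood
  have key : ∀ c : ZMod n, S.image (· + c) = S → c = 0 := by
    intro c hc
    have hmem : ∀ x : ZMod n, x + c ∈ S ↔ x ∈ S := by
      intro x
      constructor
      · intro h
        rw [← hc] at h
        obtain ⟨y, hy, hyx⟩ := Finset.mem_image.mp h
        have : y = x := add_right_cancel hyx
        exact this ▸ hy
      · intro h
        rw [← hc]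
        exact Finset.mem_image_of_mem _ h
    have hgap : gap S (s + c) = gap S s := by
      unfold gap
      congr 1
      ext d
      simp only [Set.mem_setOf_eq]
      have : s + c + (d : ZMod n) = s + (d : ZMod n) + c := by ring
      rw [this, hmem]
    have hsc : s + c ∈ S := (hmem s).mpr hs
    have := hu (s + c) hsc hgap
    exact add_eq_left.mp this
  rw [Finset.card_image_of_injective _ ?_, Finset.card_univ, ZMod.card]
  intro a b hab
  have h2 : S.image (· + (a - b)) = S := by
    have e1 : S.image (· + (a - b)) = (S.image (· + a)).image (· + (-b)) := by
      rw [Finset.image_image]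
      congr 1
      funext x
      simp [sub_eq_add_neg, add_assoc]
    have hab2 : S.image (· + a) = S.image (· + b) := hab
    rw [e1, hab2, Finset.image_image]
    have : ((· + (-b)) ∘ (· + b)) = (id : ZMod n → ZMod n) := by
      funext x; simp
    rw [this, Finset.image_id]
  have := key _ h2
  exact sub_eq_zero.mp this
end

section
/- Asymptotically almost all partitions of k are good: the number of partitions of k with all parts at least 2 equals p(k) − p(k−1), and (p(k) − p(k−1))/p(k) → 0 as k → ∞. -/
open Filter

namespace BadPatterns

open Multiset

def pp (n : ℕ) : ℕ := Fintype.card (Nat.Partition n)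

def qq (n : ℕ) : ℕ :=
  (Finset.univ.filter fun p : Nat.Partition n => ∀ i ∈ p.parts, 2 ≤ i).card

lemma one_mem_of_bad {k : ℕ} (P : Nat.Partition k)
    (h : ¬ ∀ i ∈ P.parts, 2 ≤ i) : (1 : ℕ) ∈ P.parts := by
  push_neg at h
  obtain ⟨i, hi, hi2⟩ := h
  have := P.parts_pos hi
  have : i = 1 := by omega
  rwa [this] at hi

lemma card_good (k : ℕ) (hk : 0 < k) :
    (Finset.univ.filter fun p : Nat.Partition k => ¬ ∀ i ∈ p.parts, 2 ≤ i).card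
      = pp (k - 1) := by
  rw [pp, ← Finset.card_univ]
  refine Finset.card_bij'
    (fun (P : Nat.Partition k) hP =>
      (⟨P.parts.erase 1, fun hi => P.parts_pos (Multiset.mem_of_mem_erase hi), by
        have h1 : (1:ℕ) ∈ P.parts := one_mem_of_bad P (by simpa using hP)
        have h := Multiset.cons_erase h1
        have hs : (1 ::ₘ P.parts.erase 1).sum = k := by rw [h]; exact P.parts_sum
        rw [Multiset.sum_cons] at hs
        omega⟩ : Nat.Partition (k-1)))
    (fun (Q : Nat.Partition (k-1)) _ =>
      (⟨1 ::ₘ Q.parts, fun hi => by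
          rcases Multiset.mem_cons.1 hi with h | h
          · omega
          · exact Q.parts_pos h, by
        rw [Multiset.sum_cons, Q.parts_sum]; omega⟩ : Nat.Partition k))
    ?_ ?_ ?_ ?_
  · intro P hP
    exact Finset.mem_univ _
  · intro Q hQ
    simp only [Finset.mem_filter, Finset.mem_univ, true_and]
    intro h
    exact absurd (h 1 (Multiset.mem_cons_self 1 Q.parts)) (by omega)
  · intro P hP
    have h1 : (1:ℕ) ∈ P.parts := one_mem_of_bad P (by simpa using hP)
    refine Nat.Partition.ext ?_
    exact Multiset.cons_erase h1
  · intro Q hQ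
    refine Nat.Partition.ext ?_
    exact Multiset.erase_cons_head 1 Q.parts

lemma pp_eq (k : ℕ) (hk : 0 < k) : pp k = qq k + pp (k - 1) := by
  rw [← card_good k hk, qq, pp, ← Finset.card_univ]
  exact (Finset.card_filter_add_card_filter_not _).symm

lemma part1 (k : ℕ) (hk : 0 < k) : qq k = pp k - pp (k - 1) := by
  have := pp_eq k hk; omega

/-- `t(n) ~ n^(1/8)` -/
def tf (n : ℕ) : ℕ := Nat.sqrt (Nat.sqrt (Nat.sqrt n))

/-- `H(n) ~ n^(3/8)` -/
def Hf (n : ℕ) : ℕ := Nat.sqrt n / tf n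

lemma sup_mem {s : Multiset ℕ} (h : s ≠ 0) : s.sup ∈ s := by
  induction s using Multiset.induction with
  | empty => exact absurd rfl h
  | cons a s ih =>
    rw [Multiset.sup_cons]
    rcases eq_or_ne s 0 with rfl | hs
    · simp
    · rcases le_total s.sup a with hle | hle
      · rw [sup_eq_left.2 hle]; exact Multiset.mem_cons_self a s
      · rw [sup_eq_right.2 hle]; exact Multiset.mem_cons_of_mem (ih hs)

lemma tf_ge {n : ℕ} (hn : 6561 ≤ n) : 3 ≤ tf n := by
  have h1 : 81 ≤ Nat.sqrt n := Nat.le_sqrt.2 (by omega)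
  have h2 : 9 ≤ Nat.sqrt (Nat.sqrt n) := Nat.le_sqrt.2 (by omega)
  exact Nat.le_sqrt.2 (by omega)

lemma tf4_le (n : ℕ) : tf n * tf n * (tf n * tf n) ≤ Nat.sqrt n := by
  have h1 : tf n * tf n ≤ Nat.sqrt (Nat.sqrt n) := Nat.sqrt_le _
  calc tf n * tf n * (tf n * tf n)
      ≤ Nat.sqrt (Nat.sqrt n) * Nat.sqrt (Nat.sqrt n) := Nat.mul_le_mul h1 h1
    _ ≤ Nat.sqrt n := Nat.sqrt_le _

lemma Hf_ge {n : ℕ} (hn : 6561 ≤ n) : tf n * tf n * tf n ≤ Hf n := by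
  have ht : 3 ≤ tf n := tf_ge hn
  refine (Nat.le_div_iff_mul_le (by omega)).2 ?_
  have := tf4_le n
  calc tf n * tf n * tf n * tf n = tf n * tf n * (tf n * tf n) := by ring
    _ ≤ Nat.sqrt n := this

lemma Hf_sq {n : ℕ} (hn : 6561 ≤ n) : 9 * (Hf n * Hf n) ≤ n := by
  have ht : 3 ≤ tf n := tf_ge hn
  have h1 : Hf n * tf n ≤ Nat.sqrt n := Nat.div_mul_le_self _ _
  have h2 : 3 * Hf n ≤ Hf n * tf n := by
    calc 3 * Hf n = Hf n * 3 := by ring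
      _ ≤ Hf n * tf n := Nat.mul_le_mul_left _ ht
  have h3 : 3 * Hf n ≤ Nat.sqrt n := le_trans h2 h1
  calc 9 * (Hf n * Hf n) = (3 * Hf n) * (3 * Hf n) := by ring
    _ ≤ Nat.sqrt n * Nat.sqrt n := Nat.mul_le_mul h3 h3
    _ ≤ n := Nat.sqrt_le n

/-- selector for a value `v` with large `count v * v` -/
noncomputable def bsel (n : ℕ) (s : Multiset ℕ) : ℕ :=
  open scoped Classical in
  if h : ∃ v ∈ s, n ≤ Hf n * (s.count v * v) then h.choose else 0

lemma bsel_spec {n : ℕ} {s : Multiset ℕ} (h : ∃ v ∈ s, n ≤ Hf n * (s.count v * v)) :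
    bsel n s ∈ s ∧ n ≤ Hf n * (s.count (bsel n s) * bsel n s) := by
  rw [bsel]
  rw [dif_pos h]
  exact ⟨h.choose_spec.1, h.choose_spec.2⟩

lemma pigeon {n : ℕ} {s : Multiset ℕ} (hn : 0 < n) (hsum : s.sum = n)
    (hup : ∀ i ∈ s, i < Hf n) : ∃ v ∈ s, n ≤ Hf n * (s.count v * v) := by
  have hs0 : s ≠ 0 := by
    rintro rfl; simp at hsum; omega
  have hfin : s.toFinset.Nonempty := by
    rw [Multiset.toFinset_nonempty]; exact hs0
  obtain ⟨v, hv, hmax⟩ := Finset.exists_max_image s.toFinset (fun a => s.count a * a) hfin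
  refine ⟨v, Multiset.mem_toFinset.1 hv, ?_⟩
  have hsum' : ∑ a ∈ s.toFinset, s.count a * a = n := by
    have h := Finset.sum_multiset_map_count s (id : ℕ → ℕ)
    simp only [Multiset.map_id, smul_eq_mul, id] at h
    rw [← h]
    simpa using hsum
  have hcard : s.toFinset.card ≤ Hf n := by
    have : s.toFinset ⊆ Finset.range (Hf n) := fun a ha =>
      Finset.mem_range.2 (hup a (Multiset.mem_toFinset.1 ha))
    simpa using Finset.card_le_card this
  calc n = ∑ a ∈ s.toFinset, s.count a * a := hsum'.symm
    _ ≤ s.toFinset.card • (s.count v * v) :=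
        Finset.sum_le_card_nsmul _ _ _ (fun x hx => hmax x hx)
    _ = s.toFinset.card * (s.count v * v) := by rw [smul_eq_mul]
    _ ≤ Hf n * (s.count v * v) := Nat.mul_le_mul_right _ hcard

/-- the encoding map -/
noncomputable def enc (n : ℕ) (s : Multiset ℕ) (j : ℕ) : Multiset ℕ :=
  if Hf n ≤ s.sup then
    if tf n ≤ s.sup - (s.erase s.sup).sup then
      (s.sup - (j+1)) ::ₘ (Multiset.replicate (j+1) 1 + s.erase s.sup)
    else
      (s.sup + (s.erase s.sup).sup - (tf n + 1 + (j + tf n * (s.sup - (s.erase s.sup).sup)))) ::ₘ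
        (Multiset.replicate (tf n + 1 + (j + tf n * (s.sup - (s.erase s.sup).sup))) 1 +
          (s.erase s.sup).erase (s.erase s.sup).sup)
  else
    (2 * Hf n + 2 + j) ::ₘ (Hf n + 1 + bsel n s) ::ₘ
      (Multiset.replicate (s.count (bsel n s) * bsel n s - (2 * Hf n + 2 + j + (Hf n + 1 + bsel n s))) 1 +
        s.filter (fun i => ¬ i = bsel n s))

/-- the decoding map -/
def dec (n : ℕ) (μ : Multiset ℕ) : Multiset ℕ × ℕ :=
  let t := tf n
  let H := Hf n
  let w := μ.count 1
  let ν := μ.filter (fun i => 2 ≤ i)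
  let K := ν.sup
  if w ≤ t then
    ((K + w) ::ₘ ν.erase K, w - 1)
  else if w ≤ t * t + t then
    (((K + w) + (w - (t+1)) / t) / 2 ::ₘ
      ((K + w) - ((K + w) + (w - (t+1)) / t) / 2) ::ₘ ν.erase K, (w - (t+1)) % t)
  else
    (Multiset.replicate ((w + K + (ν.erase K).sup) / ((ν.erase K).sup - (H+1)))
        ((ν.erase K).sup - (H+1)) + (ν.erase K).erase (ν.erase K).sup,
      K - (2*H+2))

lemma enc_spec (n : ℕ) (hn : 6561 ≤ n) (s : Multiset ℕ) (h2 : ∀ i ∈ s, 2 ≤ i)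
    (hsum : s.sum = n) (j : ℕ) (hj : j < tf n) :
    (∀ i ∈ enc n s j, 0 < i) ∧ (enc n s j).sum = n ∧ dec n (enc n s j) = (s, j) := by
  have ht : 3 ≤ tf n := tf_ge hn
  have hH : tf n * tf n * tf n ≤ Hf n := Hf_ge hn
  have haux : tf n * tf n + tf n + 1 ≤ tf n * tf n * tf n := by nlinarith
  have haux2 : tf n + 3 ≤ tf n * tf n := by nlinarith
  have hs0 : s ≠ 0 := by rintro rfl; simp at hsum; omega
  have hMmem : s.sup ∈ s := sup_mem hs0
  have hMn : s.sup ≤ n := hsum ▸ Multiset.le_sum_of_mem hMmem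
  have hM2' : 2 ≤ s.sup := h2 _ hMmem
  have hcons : s.sup ::ₘ s.erase s.sup = s := Multiset.cons_erase hMmem
  have hRsum : (s.erase s.sup).sum = n - s.sup := by
    have h := congrArg Multiset.sum hcons
    rw [Multiset.sum_cons, hsum] at h; omega
  have hR2 : ∀ i ∈ s.erase s.sup, 2 ≤ i := fun i hi => h2 i (Multiset.mem_of_mem_erase hi)
  have hR1 : Multiset.count 1 (s.erase s.sup) = 0 := by
    rw [Multiset.count_eq_zero]; intro hmm; have := hR2 1 hmm; omega
  have hM2le : (s.erase s.sup).sup ≤ s.sup :=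
    Multiset.sup_le.2 fun b hb => Multiset.le_sup (Multiset.mem_of_mem_erase hb)
  rw [enc]
  split_ifs with hHM hgap
  · -- Case A1 : big gap
    set t := tf n with htf
    set H := Hf n with hHf
    set M := s.sup with hMd
    set R := s.erase M with hRd
    have hnew2 : 2 ≤ M - (j+1) := by omega
    have hsupR : R.sup ≤ M - (j + 1) := by omega
    have hw : Multiset.count 1 ((M - (j+1)) ::ₘ (Multiset.replicate (j+1) 1 + R)) = j + 1 := by
      rw [Multiset.count_cons_of_ne (by omega), Multiset.count_add, Multiset.count_replicate,
        if_pos rfl, hR1]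
    have hrepf : Multiset.filter (fun i => 2 ≤ i) (Multiset.replicate (j+1) 1) = 0 :=
      Multiset.filter_eq_nil.2 (fun a ha => by rw [Multiset.eq_of_mem_replicate ha]; omega)
    have hfilt : Multiset.filter (fun i => 2 ≤ i)
        ((M - (j+1)) ::ₘ (Multiset.replicate (j+1) 1 + R)) = (M - (j+1)) ::ₘ R := by
      rw [Multiset.filter_cons_of_pos _ hnew2, Multiset.filter_add, hrepf,
        Multiset.filter_eq_self.2 hR2, zero_add]
    have hsupv : ((M - (j+1)) ::ₘ R).sup = M - (j+1) := by
      rw [Multiset.sup_cons]; exact sup_eq_left.2 hsupR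
    refine ⟨?_, ?_, ?_⟩
    · intro i hi
      rcases Multiset.mem_cons.1 hi with rfl | hi'
      · omega
      rcases Multiset.mem_add.1 hi' with h' | h'
      · rw [Multiset.eq_of_mem_replicate h']; omega
      · have := hR2 i h'; omega
    · rw [Multiset.sum_cons, Multiset.sum_add, Multiset.sum_replicate, hRsum]
      simp only [smul_eq_mul, mul_one]
      omega
    · simp only [dec]
      rw [hw, hfilt, hsupv]
      rw [if_pos (by omega : j + 1 ≤ tf n)]
      rw [Multiset.erase_cons_head]
      have hMM : M - (j+1) + (j+1) = M := by omega
      rw [hMM]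
      rw [hcons]
      simp
  · -- Case A2 : small gap, merge two biggest parts
    set t := tf n with htf
    set H := Hf n with hHf
    set M := s.sup with hMd
    set R := s.erase M with hRd
    set M2 := R.sup with hM2d
    have hgap' : M - M2 < t := by omega
    have hM2pos : 1 ≤ M2 := by omega
    have hR0 : R ≠ 0 := by
      intro h0
      rw [h0] at hM2d
      simp [Multiset.sup_zero] at hM2d
      omega
    have hM2mem : M2 ∈ R := hM2d ▸ sup_mem hR0
    have hM2n : M2 ≤ n - M := by
      have := Multiset.le_sum_of_mem hM2mem
      omega
    have hcons2 : M2 ::ₘ R.erase M2 = R := Multiset.cons_erase hM2mem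
    have hR2sum : (R.erase M2).sum = n - M - M2 := by
      have h := congrArg Multiset.sum hcons2
      rw [Multiset.sum_cons, hRsum] at h; omega
    have hRR2 : ∀ i ∈ R.erase M2, 2 ≤ i := fun i hi => hR2 i (Multiset.mem_of_mem_erase hi)
    have hRR1 : Multiset.count 1 (R.erase M2) = 0 := by
      rw [Multiset.count_eq_zero]; intro hmm; have := hRR2 1 hmm; omega
    have hsup3 : (R.erase M2).sup ≤ M2 :=
      hM2d ▸ Multiset.sup_le.2 fun b hb => Multiset.le_sup (Multiset.mem_of_mem_erase hb)
    have hM22 : 2 ≤ M2 := hR2 _ hM2mem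
    set b := t + 1 + (j + t * (M - M2)) with hb
    have hgprod : t * (M - M2) + t ≤ t * t := by
      have h5 : (M - M2) + 1 ≤ t := by omega
      calc t * (M - M2) + t = t * ((M - M2) + 1) := by ring
        _ ≤ t * t := Nat.mul_le_mul_left t h5
    have hble : b ≤ t * t + t := by omega
    have hbH : b < H := by omega
    have hbM : b < M := by omega
    have hK2 : 2 ≤ M + M2 - b := by omega
    have hKgt : M2 < M + M2 - b := by omega
    have hsupK : (R.erase M2).sup ≤ M + M2 - b := by omega
    have hw : Multiset.count 1 ((M + M2 - b) ::ₘ (Multiset.replicate b 1 + R.erase M2)) = b := by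
      rw [Multiset.count_cons_of_ne (by omega), Multiset.count_add, Multiset.count_replicate,
        if_pos rfl, hRR1]
      omega
    have hrepf : Multiset.filter (fun i => 2 ≤ i) (Multiset.replicate b 1) = 0 :=
      Multiset.filter_eq_nil.2 (fun a ha => by rw [Multiset.eq_of_mem_replicate ha]; omega)
    have hfilt : Multiset.filter (fun i => 2 ≤ i)
        ((M + M2 - b) ::ₘ (Multiset.replicate b 1 + R.erase M2)) = (M + M2 - b) ::ₘ R.erase M2 := by
      rw [Multiset.filter_cons_of_pos _ hK2, Multiset.filter_add, hrepf,
        Multiset.filter_eq_self.2 hRR2, zero_add]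
    have hsupv : ((M + M2 - b) ::ₘ R.erase M2).sup = M + M2 - b := by
      rw [Multiset.sup_cons]; exact sup_eq_left.2 hsupK
    refine ⟨?_, ?_, ?_⟩
    · intro i hi
      rcases Multiset.mem_cons.1 hi with rfl | hi'
      · omega
      rcases Multiset.mem_add.1 hi' with h' | h'
      · rw [Multiset.eq_of_mem_replicate h']; omega
      · have := hRR2 i h'; omega
    · rw [Multiset.sum_cons, Multiset.sum_add, Multiset.sum_replicate, hR2sum]
      simp only [smul_eq_mul, mul_one]
      omega
    · simp only [dec]
      rw [← htf, ← hHf, hw, hfilt, hsupv]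
      rw [if_neg (by omega : ¬ b ≤ t), if_pos hble]
      have e1 : b - (t + 1) = j + t * (M - M2) := by omega
      rw [e1]
      have hdiv : (j + t * (M - M2)) / t = M - M2 := by
        rw [Nat.add_mul_div_left _ _ (by omega : 0 < t), Nat.div_eq_of_lt hj, Nat.zero_add]
      have hmod : (j + t * (M - M2)) % t = j := by
        rw [Nat.add_mul_mod_self_left, Nat.mod_eq_of_lt hj]
      rw [hdiv, hmod]
      have e2 : M + M2 - b + b = M + M2 := by omega
      rw [e2]
      have e3 : M + M2 + (M - M2) = 2 * M := by omega
      rw [e3, Nat.mul_div_cancel_left M (by norm_num : 0 < 2)]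
      have e4 : M + M2 - M = M2 := by omega
      rw [e4, Multiset.erase_cons_head, hcons2, hcons]
  · -- Case B : small sup, kill a popular value
    set t := tf n with htf
    set H := Hf n with hHf
    set M := s.sup with hMd
    have hMH : M < H := by omega
    have hup : ∀ i ∈ s, i < H := fun i hi => lt_of_le_of_lt (Multiset.le_sup hi) hMH
    have hex : ∃ v ∈ s, n ≤ Hf n * (s.count v * v) := pigeon (by omega) hsum (by rw [← hHf]; exact hup)
    obtain ⟨hvmem, hvbig⟩ := bsel_spec hex
    set v := bsel n s with hv
    set m := s.count v with hm
    have hv2 : 2 ≤ v := h2 _ hvmem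
    have hvH : v < H := hup _ hvmem
    have hHpos : 0 < H := by omega
    have hmv : 9 * H ≤ m * v := by
      have h1 : H * (9 * H) ≤ H * (m * v) := by
        calc H * (9 * H) = 9 * (H * H) := by ring
          _ ≤ n := Hf_sq hn
          _ ≤ H * (m * v) := hvbig
      exact Nat.le_of_mul_le_mul_left h1 hHpos
    set P1 := 2 * H + 2 + j with hP1
    set P2 := H + 1 + v with hP2
    have hP12 : P1 + P2 ≤ 5 * H := by omega
    set F := Multiset.filter (fun i => ¬ i = v) s with hF
    have hF2 : ∀ i ∈ F, 2 ≤ i := fun i hi => h2 i (Multiset.mem_of_mem_filter hi)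
    have hF1 : Multiset.count 1 F = 0 := by
      rw [Multiset.count_eq_zero]; intro hmm; have := hF2 1 hmm; omega
    have hFsup : F.sup ≤ M :=
      hMd ▸ Multiset.sup_le.2 fun b hb => Multiset.le_sup (Multiset.mem_of_mem_filter hb)
    have hsplit : Multiset.replicate m v + F = s := by
      ext a
      rw [Multiset.count_add, Multiset.count_replicate, hF, Multiset.count_filter]
      by_cases hav : a = v
      · subst hav; simp [hm]
      · simp [hav, Ne.symm hav]
    have hFsum : F.sum = n - m * v ∧ m * v ≤ n := by
      have h := congrArg Multiset.sum hsplit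
      rw [Multiset.sum_add, Multiset.sum_replicate, hsum, smul_eq_mul] at h
      omega
    have hw9 : P1 + P2 + (t * t + t + 1) ≤ m * v := by omega
    set W := m * v - (P1 + P2) with hW
    have hw : Multiset.count 1 (P1 ::ₘ P2 ::ₘ (Multiset.replicate W 1 + F)) = W := by
      rw [Multiset.count_cons_of_ne (by omega), Multiset.count_cons_of_ne (by omega),
        Multiset.count_add, Multiset.count_replicate, if_pos rfl, hF1]
      omega
    have hrepf : Multiset.filter (fun i => 2 ≤ i) (Multiset.replicate W 1) = 0 :=
      Multiset.filter_eq_nil.2 (fun a ha => by rw [Multiset.eq_of_mem_replicate ha]; omega)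
    have hfilt : Multiset.filter (fun i => 2 ≤ i) (P1 ::ₘ P2 ::ₘ (Multiset.replicate W 1 + F))
        = P1 ::ₘ P2 ::ₘ F := by
      rw [Multiset.filter_cons_of_pos _ (by omega : 2 ≤ P1),
        Multiset.filter_cons_of_pos _ (by omega : 2 ≤ P2), Multiset.filter_add, hrepf,
        Multiset.filter_eq_self.2 hF2, zero_add]
    have hsup1 : (P1 ::ₘ P2 ::ₘ F).sup = P1 := by
      rw [Multiset.sup_cons, Multiset.sup_cons]
      exact sup_eq_left.2 (sup_le (by omega) (by omega))
    have hsup2 : (P2 ::ₘ F).sup = P2 := by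
      rw [Multiset.sup_cons]
      exact sup_eq_left.2 (by omega)
    refine ⟨?_, ?_, ?_⟩
    · intro i hi
      rcases Multiset.mem_cons.1 hi with rfl | hi'
      · omega
      rcases Multiset.mem_cons.1 hi' with rfl | hi''
      · omega
      rcases Multiset.mem_add.1 hi'' with h' | h'
      · rw [Multiset.eq_of_mem_replicate h']; omega
      · have := hF2 i h'; omega
    · rw [Multiset.sum_cons, Multiset.sum_cons, Multiset.sum_add, Multiset.sum_replicate,
        hFsum.1]
      simp only [smul_eq_mul, mul_one]
      omega
    · simp only [dec]
      rw [← htf, ← hHf, hw, hfilt, hsup1, Multiset.erase_cons_head, hsup2,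
        Multiset.erase_cons_head]
      rw [if_neg (by omega : ¬ W ≤ t), if_neg (by omega : ¬ W ≤ t * t + t)]
      have e1 : P2 - (H + 1) = v := by omega
      have e2 : W + P1 + P2 = m * v := by omega
      have e3 : P1 - (2 * H + 2) = j := by omega
      rw [e1, e2, e3, Nat.mul_div_cancel _ (by omega : 0 < v), hsplit]

/-- the encoded partition -/
noncomputable def encP (n : ℕ) (x : Nat.Partition n × ℕ) : Nat.Partition n :=
  if h : 6561 ≤ n ∧ (∀ i ∈ x.1.parts, 2 ≤ i) ∧ x.2 < tf n then
    ⟨enc n x.1.parts x.2,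
      fun hi => (enc_spec n h.1 x.1.parts h.2.1 x.1.parts_sum x.2 h.2.2).1 _ hi,
      (enc_spec n h.1 x.1.parts h.2.1 x.1.parts_sum x.2 h.2.2).2.1⟩
  else x.1

lemma key (n : ℕ) (hn : 6561 ≤ n) : qq n * tf n ≤ pp n := by
  classical
  have hcard : ((Finset.univ.filter fun p : Nat.Partition n => ∀ i ∈ p.parts, 2 ≤ i) ×ˢ
      Finset.range (tf n)).card = qq n * tf n := by
    rw [Finset.card_product, Finset.card_range, qq]
  rw [← hcard, pp, ← Finset.card_univ]
  apply Finset.card_le_card_of_injOn (encP n)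
  · intro x hx
    exact Finset.mem_univ _
  · intro x hx y hy hxy
    rw [Finset.mem_coe, Finset.mem_product, Finset.mem_filter, Finset.mem_range] at hx hy
    have hx' : 6561 ≤ n ∧ (∀ i ∈ x.1.parts, 2 ≤ i) ∧ x.2 < tf n := ⟨hn, hx.1.2, hx.2⟩
    have hy' : 6561 ≤ n ∧ (∀ i ∈ y.1.parts, 2 ≤ i) ∧ y.2 < tf n := ⟨hn, hy.1.2, hy.2⟩
    simp only [encP] at hxy
    rw [dif_pos hx', dif_pos hy'] at hxy
    have hparts : enc n x.1.parts x.2 = enc n y.1.parts y.2 := congrArg Nat.Partition.parts hxy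
    have hdx := (enc_spec n hn x.1.parts hx.1.2 x.1.parts_sum x.2 hx.2).2.2
    have hdy := (enc_spec n hn y.1.parts hy.1.2 y.1.parts_sum y.2 hy.2).2.2
    rw [hparts, hdy] at hdx
    have h1 : x.1.parts = y.1.parts := (congrArg Prod.fst hdx).symm
    have h2 : x.2 = y.2 := (congrArg Prod.snd hdx).symm
    exact Prod.ext (Nat.Partition.ext h1) h2

lemma tf_tendsto : Tendsto tf atTop atTop := by
  have hsqrt : Tendsto Nat.sqrt atTop atTop :=
    tendsto_atTop_atTop.2 fun b => ⟨b * b, fun a ha => Nat.le_sqrt.2 ha⟩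
  exact (hsqrt.comp hsqrt).comp hsqrt

lemma pp_pos (n : ℕ) : 0 < pp n := Fintype.card_pos

theorem main_tendsto :
    Tendsto (fun k : ℕ => ((pp k - pp (k - 1) : ℕ) : ℝ) / (pp k : ℝ)) atTop (nhds 0) := by
  have htReal : Tendsto (fun k => (tf k : ℝ)) atTop atTop :=
    tendsto_natCast_atTop_atTop.comp tf_tendsto
  have h3 : Tendsto (fun k => 1 / (tf k : ℝ)) atTop (nhds 0) := by
    simpa [one_div, Function.comp_def] using tendsto_inv_atTop_zero.comp htReal
  have h1 : ∀ᶠ k : ℕ in atTop, 0 ≤ ((pp k - pp (k - 1) : ℕ) : ℝ) / (pp k : ℝ) := by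
    filter_upwards with k
    positivity
  have h2 : ∀ᶠ k : ℕ in atTop, ((pp k - pp (k - 1) : ℕ) : ℝ) / (pp k : ℝ) ≤ 1 / (tf k : ℝ) := by
    filter_upwards [eventually_ge_atTop 6561] with k hk
    have hq : pp k - pp (k - 1) = qq k := (part1 k (by omega)).symm
    rw [hq]
    have hkey := key k hk
    have htpos : (0 : ℝ) < (tf k : ℝ) := by
      have := tf_ge hk
      exact_mod_cast by omega
    have hppos : (0 : ℝ) < (pp k : ℝ) := by exact_mod_cast pp_pos k
    rw [div_le_div_iff₀ hppos htpos]
    calc ((qq k : ℝ)) * (tf k : ℝ) = ((qq k * tf k : ℕ) : ℝ) := by push_cast; ring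
      _ ≤ ((pp k : ℕ) : ℝ) := by exact_mod_cast hkey
      _ = 1 * (pp k : ℝ) := by ring
  exact tendsto_of_tendsto_of_tendsto_of_le_of_le' tendsto_const_nhds h3 h1 h2

end BadPatterns

open Filter

/-- Almost all partitions are good: the number of partitions of `k` with all
parts at least `2` equals `p(k) - p(k-1)`, and this is a vanishing proportion of
all partitions as `k → ∞`. -/
theorem bad_patterns_negligible :
    (∀ k : ℕ, 0 < k →
      (Finset.univ.filter fun p : Nat.Partition k => ∀ i ∈ p.parts, 2 ≤ i).card =
        Fintype.card (Nat.Partition k) - Fintype.card (Nat.Partition (k - 1))) ∧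
    Tendsto
      (fun k : ℕ =>
        ((Fintype.card (Nat.Partition k) -
            Fintype.card (Nat.Partition (k - 1)) : ℕ) : ℝ) /
          (Fintype.card (Nat.Partition k) : ℝ))
      atTop (nhds 0) := by
  constructor
  · intro k hk
    exact BadPatterns.part1 k hk
  · exact BadPatterns.main_tendsto
end

section
/- (Schur's theorem on denumerants) Let p_1, ..., p_t be positive integers with gcd(p_1,...,p_t) = 1 and let Q = p_1·p_2·...·p_t. Then the number ψ(n) of solutions (x_1,...,x_t) in nonnegative integers to p_1 x_1 + ... + p_t x_t = n satisfies ψ(n) ~ n^{t−1}/((t−1)!·Q) as n → ∞. -/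
open Filter Finset

namespace SchurAux


/-- Solutions of `∑ p i * x i = n`, as a Finset. -/
def sols {t : ℕ} (p : Fin t → ℕ) (n : ℕ) : Finset (Fin t → ℕ) :=
  (Fintype.piFinset fun _ => Finset.range (n+1)).filter fun x => ∑ i, p i * x i = n

/-- Solutions of `∑ p i * x i ≤ n`, as a Finset. -/
def solsLe {t : ℕ} (p : Fin t → ℕ) (n : ℕ) : Finset (Fin t → ℕ) :=
  (Fintype.piFinset fun _ => Finset.range (n+1)).filter fun x => ∑ i, p i * x i ≤ n

theorem coord_le {t : ℕ} {p : Fin t → ℕ} (hp : ∀ i, 0 < p i) {x : Fin t → ℕ} {n : ℕ}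
    (h : ∑ i, p i * x i ≤ n) (i : Fin t) : x i ≤ n := by
  calc x i ≤ p i * x i := Nat.le_mul_of_pos_left _ (hp i)
    _ ≤ ∑ j, p j * x j :=
      Finset.single_le_sum (f := fun j => p j * x j) (fun j _ => Nat.zero_le _) (Finset.mem_univ i)
    _ ≤ n := h

theorem mem_sols {t : ℕ} {p : Fin t → ℕ} (hp : ∀ i, 0 < p i) {x : Fin t → ℕ} {n : ℕ} :
    x ∈ sols p n ↔ ∑ i, p i * x i = n := by
  simp only [sols, Finset.mem_filter, Fintype.mem_piFinset, Finset.mem_range, Nat.lt_succ_iff]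
  exact ⟨fun h => h.2, fun h => ⟨fun i => coord_le hp h.le i, h⟩⟩

theorem mem_solsLe {t : ℕ} {p : Fin t → ℕ} (hp : ∀ i, 0 < p i) {x : Fin t → ℕ} {n : ℕ} :
    x ∈ solsLe p n ↔ ∑ i, p i * x i ≤ n := by
  simp only [solsLe, Finset.mem_filter, Fintype.mem_piFinset, Finset.mem_range, Nat.lt_succ_iff]
  exact ⟨fun h => h.2, fun h => ⟨fun i => coord_le hp h i, h⟩⟩

theorem mem_solsLe_one {t : ℕ} {x : Fin t → ℕ} {n : ℕ} :
    x ∈ solsLe (fun _ => 1) n ↔ ∑ i, x i ≤ n := by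
  rw [mem_solsLe (fun _ => Nat.one_pos)]; simp

/-- Stars and bars: number of `t`-tuples with sum at most `m`. -/
theorem card_solsLe_one (t m : ℕ) :
    (solsLe (fun _ : Fin t => 1) m).card = (m + t).choose t := by
  induction t generalizing m with
  | zero =>
    rw [Nat.choose_zero_right]
    apply Finset.card_eq_one.mpr
    refine ⟨fun i => i.elim0, ?_⟩
    ext y
    simp only [Finset.mem_singleton, mem_solsLe_one]
    constructor
    · intro _; funext i; exact i.elim0
    · intro h; subst h; simp
  | succ t ih =>
    have hmaps : ∀ y ∈ solsLe (fun _ : Fin (t+1) => 1) m, y 0 ∈ Finset.range (m+1) := by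
      intro y hy
      rw [mem_solsLe_one] at hy
      rw [Finset.mem_range, Nat.lt_succ_iff]
      calc y 0 ≤ ∑ i, y i := Finset.single_le_sum (fun j _ => Nat.zero_le _) (Finset.mem_univ 0)
        _ ≤ m := hy
    rw [Finset.card_eq_sum_card_fiberwise hmaps]
    have hfib : ∀ k ∈ Finset.range (m+1),
        ((solsLe (fun _ : Fin (t+1) => 1) m).filter fun y => y 0 = k).card
          = (m - k + t).choose t := by
      intro k hk
      rw [Finset.mem_range, Nat.lt_succ_iff] at hk
      rw [← ih (m - k)]
      apply Finset.card_bij (fun y _ => Fin.tail y)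
      · intro y hy
        simp only [Finset.mem_filter, mem_solsLe_one] at hy
        rw [mem_solsLe_one]
        have h1 := hy.1
        rw [Fin.sum_univ_succ, hy.2] at h1
        have h2 : ∑ i, Fin.tail y i = ∑ i : Fin t, y i.succ := rfl
        omega
      · intro y hy z hz hyz
        simp only [Finset.mem_filter] at hy hz
        funext i
        refine Fin.cases ?_ ?_ i
        · rw [hy.2, hz.2]
        · intro j; exact congrFun hyz j
      · intro z hz
        rw [mem_solsLe_one] at hz
        refine ⟨Fin.cons k z, ?_, ?_⟩
        · simp only [Finset.mem_filter, mem_solsLe_one, Fin.sum_univ_succ, Fin.cons_zero,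
            Fin.cons_succ, and_true]
          omega
        · exact rfl
    rw [Finset.sum_congr rfl hfib]
    have hrefl := Finset.sum_range_reflect (fun j => (j + t).choose t) (m+1)
    have : ∀ x ∈ Finset.range (m+1), (m - x + t).choose t = (m + 1 - 1 - x + t).choose t := by
      intro x hx
      have hx2 : m - x = m + 1 - 1 - x := by omega
      rw [hx2]
    rw [Finset.sum_congr rfl this, hrefl]
    have h2 : ∑ j ∈ Finset.range (m+1), (j + t).choose t
        = ∑ i ∈ Finset.Ico t (t + (m+1)), i.choose t := by
      rw [Finset.sum_Ico_eq_sum_range]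
      have : t + (m+1) - t = m + 1 := by omega
      rw [this]
      exact Finset.sum_congr rfl fun j _ => by rw [Nat.add_comm]
    rw [h2]
    have h3 : Finset.Ico t (t + (m + 1)) = Finset.Icc t (m + t) := by
      have : t + (m+1) = (m + t) + 1 := by omega
      rw [this, Finset.Ico_add_one_right_eq_Icc]
    rw [h3, Nat.sum_Icc_choose, Nat.add_assoc]



section
variable {t : ℕ} {p : Fin t → ℕ} (hp : ∀ i, 0 < p i)
include hp

/-- Lower sandwich: `(m+t).choose t ≤ Q * Φ m`. -/
theorem choose_le_Q_mul_card (m : ℕ) :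
    (m + t).choose t ≤ (∏ i, p i) * (solsLe p m).card := by
  rw [← card_solsLe_one t m]
  have hcard : ((solsLe p m) ×ˢ Fintype.piFinset fun i => Finset.range (p i)).card
      = (∏ i, p i) * (solsLe p m).card := by
    rw [Finset.card_product, Fintype.card_piFinset]
    simp [Finset.card_range, Nat.mul_comm]
  rw [← hcard]
  apply Finset.card_le_card_of_injOn
    (fun y => (fun i => y i / p i, fun i => y i % p i))
  · intro y hy
    rw [Finset.mem_coe, mem_solsLe_one] at hy
    rw [Finset.mem_coe, Finset.mem_product]
    constructor
    · rw [mem_solsLe hp]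
      calc ∑ i, p i * (y i / p i) ≤ ∑ i, y i := by
            apply Finset.sum_le_sum
            intro i _
            rw [Nat.mul_comm]
            exact Nat.div_mul_le_self _ _
        _ ≤ m := hy
    · rw [Fintype.mem_piFinset]
      intro i
      rw [Finset.mem_range]
      exact Nat.mod_lt _ (hp i)
  · intro y hy z hz hyz
    simp only [Prod.mk.injEq] at hyz
    funext i
    rw [← Nat.div_add_mod (y i) (p i), ← Nat.div_add_mod (z i) (p i),
      congrFun hyz.1 i, congrFun hyz.2 i]

/-- Upper sandwich: `Q * Φ m ≤ (m + P + t).choose t` with `P = ∑ (p i - 1)`. -/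
theorem Q_mul_card_le_choose (m : ℕ) :
    (∏ i, p i) * (solsLe p m).card ≤ (m + (∑ i, (p i - 1)) + t).choose t := by
  rw [← card_solsLe_one t (m + ∑ i, (p i - 1))]
  have hcard : ((solsLe p m) ×ˢ Fintype.piFinset fun i => Finset.range (p i)).card
      = (∏ i, p i) * (solsLe p m).card := by
    rw [Finset.card_product, Fintype.card_piFinset]
    simp [Finset.card_range, Nat.mul_comm]
  rw [← hcard]
  apply Finset.card_le_card_of_injOn (fun xr => fun i => p i * xr.1 i + xr.2 i)
  · intro xr hxr
    rw [Finset.mem_coe, Finset.mem_product, mem_solsLe hp, Fintype.mem_piFinset] at hxr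
    rw [Finset.mem_coe, mem_solsLe_one]
    rw [Finset.sum_add_distrib]
    apply Nat.add_le_add hxr.1
    apply Finset.sum_le_sum
    intro i _
    have := hxr.2 i
    rw [Finset.mem_range] at this
    omega
  · intro xr hxr yr hyr hxy
    rw [Finset.mem_coe, Finset.mem_product, Fintype.mem_piFinset] at hxr hyr
    have key : ∀ i, p i * xr.1 i + xr.2 i = p i * yr.1 i + yr.2 i := fun i => congrFun hxy i
    have h1 : xr.1 = yr.1 := by
      funext i
      have hx2 := hxr.2 i; have hy2 := hyr.2 i
      rw [Finset.mem_range] at hx2 hy2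
      have := key i
      rcases Nat.lt_trichotomy (xr.1 i) (yr.1 i) with h | h | h
      · exfalso; nlinarith [hp i]
      · exact h
      · exfalso; nlinarith [hp i]
    have h2 : xr.2 = yr.2 := by
      funext i
      have := key i
      rw [congrFun h1 i] at this
      omega
    exact Prod.ext h1 h2

/-- Fiberwise: `Φ n = ∑_{m ≤ n} ψ m`. -/
theorem card_solsLe_eq_sum (n : ℕ) :
    (solsLe p n).card = ∑ m ∈ Finset.range (n+1), (sols p m).card := by
  have hmaps : ∀ x ∈ solsLe p n, (∑ i, p i * x i) ∈ Finset.range (n+1) := by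
    intro x hx
    rw [mem_solsLe hp] at hx
    rw [Finset.mem_range, Nat.lt_succ_iff]; exact hx
  rw [Finset.card_eq_sum_card_fiberwise hmaps]
  apply Finset.sum_congr rfl
  intro m hm
  rw [Finset.mem_range, Nat.lt_succ_iff] at hm
  congr 1
  ext x
  simp only [Finset.mem_filter, mem_solsLe hp, mem_sols hp]
  constructor
  · exact fun h => h.2
  · intro h; exact ⟨le_trans (le_of_eq h) hm, h⟩

/-- Shift: if `m` is representable then `ψ n ≤ ψ (n + m)`. -/
theorem card_sols_le_shift {m : ℕ} (hm : (sols p m).Nonempty) (n : ℕ) :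
    (sols p n).card ≤ (sols p (n + m)).card := by
  obtain ⟨y, hy⟩ := hm
  rw [mem_sols hp] at hy
  apply Finset.card_le_card_of_injOn (fun x => x + y)
  · intro x hx
    rw [Finset.mem_coe, mem_sols hp] at hx ⊢
    simp only [Pi.add_apply, Nat.mul_add, Finset.sum_add_distrib, hx, hy]
  · intro x _ z _ hxz
    funext i
    have := congrFun hxz i
    simp only [Pi.add_apply] at this
    omega

end


/-- Bézout for finsets in ℕ (with ℤ coefficients). -/
theorem finset_bezout {ι : Type*} [DecidableEq ι] (s : Finset ι) (f : ι → ℕ) :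
    ∃ c : ι → ℤ, ∑ i ∈ s, c i * (f i : ℤ) = ((s.gcd f : ℕ) : ℤ) := by
  induction s using Finset.induction_on with
  | empty => exact ⟨0, by simp⟩
  | @insert a s ha ih =>
    obtain ⟨c, hc⟩ := ih
    refine ⟨Function.update (fun i => c i * Nat.gcdB (f a) (s.gcd f)) a
      (Nat.gcdA (f a) (s.gcd f)), ?_⟩
    rw [Finset.sum_insert ha, Function.update_self]
    have hrest : ∑ i ∈ s, Function.update (fun i => c i * Nat.gcdB (f a) (s.gcd f)) a
          (Nat.gcdA (f a) (s.gcd f)) i * (f i : ℤ)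
        = (∑ i ∈ s, c i * (f i : ℤ)) * Nat.gcdB (f a) (s.gcd f) := by
      rw [Finset.sum_mul]
      apply Finset.sum_congr rfl
      intro i hi
      rw [Function.update_of_ne (by rintro rfl; exact ha hi)]
      ring
    rw [hrest, hc]
    have hgcd : (insert a s).gcd f = Nat.gcd (f a) (s.gcd f) := by
      rw [Finset.gcd_insert]
      rfl
    rw [hgcd, Nat.gcd_eq_gcd_ab]
    ring

section
variable {t : ℕ} {p : Fin t → ℕ} (hp : ∀ i, 0 < p i)
include hp

theorem sols_add {m n : ℕ} (hm : (sols p m).Nonempty) (hn : (sols p n).Nonempty) :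
    (sols p (m + n)).Nonempty := by
  obtain ⟨x, hx⟩ := hm; obtain ⟨y, hy⟩ := hn
  rw [mem_sols hp] at hx hy
  exact ⟨x + y, (mem_sols hp).mpr (by
    simp only [Pi.add_apply, Nat.mul_add, Finset.sum_add_distrib, hx, hy])⟩

theorem sols_smul (k : ℕ) {m : ℕ} (hm : (sols p m).Nonempty) :
    (sols p (k * m)).Nonempty := by
  induction k with
  | zero => exact ⟨0, (mem_sols hp).mpr (by simp)⟩
  | succ k ih =>
    have := sols_add hp ih hm
    rwa [show k * m + m = (k+1) * m by ring] at this

theorem exists_rep_threshold (hgcd : Finset.univ.gcd p = 1) :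
    ∃ N₀ : ℕ, ∀ n, N₀ ≤ n → (sols p n).Nonempty := by
  obtain ⟨c, hc⟩ := finset_bezout Finset.univ p
  rw [hgcd] at hc
  norm_num at hc
  set yp : Fin t → ℕ := fun i => (c i).toNat with hyp
  set ym : Fin t → ℕ := fun i => (-(c i)).toNat with hym
  set B : ℕ := ∑ i, p i * ym i with hB
  have hBmem : (sols p B).Nonempty := ⟨ym, (mem_sols hp).mpr rfl⟩
  have hkey : ∑ i, p i * yp i = B + 1 := by
    have : (↑(∑ i, p i * yp i) : ℤ) = (↑(B + 1) : ℤ) := by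
      push_cast
      rw [hB]
      push_cast
      have : ∀ i, (p i : ℤ) * (yp i : ℤ) - (p i : ℤ) * (ym i : ℤ) = c i * p i := by
        intro i
        have h1 : ((c i).toNat : ℤ) - ((-(c i)).toNat : ℤ) = c i := by omega
        rw [hyp, hym]
        push_cast [Int.toNat_of_nonneg]
        nlinarith [h1]
      calc (∑ i, (p i : ℤ) * (yp i : ℤ))
          = ∑ i, ((p i : ℤ) * (ym i : ℤ) + c i * p i) := by
            apply Finset.sum_congr rfl
            intro i _
            have := this i
            linarith
        _ = (∑ i, (p i : ℤ) * (ym i : ℤ)) + ∑ i, c i * (p i : ℤ) := by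
            rw [Finset.sum_add_distrib]
        _ = (∑ i, (p i : ℤ) * (ym i : ℤ)) + 1 := by rw [hc]
    exact_mod_cast this
  have hB1mem : (sols p (B + 1)).Nonempty := ⟨yp, (mem_sols hp).mpr hkey⟩
  rcases Nat.eq_zero_or_pos B with hB0 | hBpos
  · refine ⟨0, fun n _ => ?_⟩
    have h1 : (sols p 1).Nonempty := by rwa [hB0, Nat.zero_add] at hB1mem
    have := sols_smul hp n h1
    rwa [Nat.mul_one] at this
  · refine ⟨B * B, fun n hn => ?_⟩
    set q := n / B with hq
    set r := n % B with hr
    have hrB : r < B := Nat.mod_lt _ hBpos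
    have hqr : r ≤ q := by
      have : B ≤ q := by
        rw [hq]
        exact Nat.le_div_iff_mul_le hBpos |>.mpr (by nlinarith)
      omega
    have hn' : n = (q - r) * B + r * (B + 1) := by
      have := Nat.div_add_mod n B
      have h2 : (q - r) * B = q * B - r * B := Nat.sub_mul q r B
      have h3 : r * B ≤ q * B := Nat.mul_le_mul_right B hqr
      have h4 : q * B + r = n := by rw [hq, hr, Nat.mul_comm]; exact this
      have h5 : r * (B + 1) = r * B + r := by ring
      omega
    rw [hn']
    exact sols_add hp (sols_smul hp _ hBmem) (sols_smul hp _ hB1mem)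

end


theorem choose_telescope (s m : ℕ) : ∀ d : ℕ,
    (m + d).choose (s+1) = m.choose (s+1) + ∑ j ∈ Finset.range d, (m + j).choose s
  | 0 => by simp
  | (d+1) => by
    rw [← Nat.add_assoc, Nat.choose_succ_succ (m + d) s, choose_telescope s m d,
      Finset.sum_range_succ]
    ring

section
variable {t : ℕ} {p : Fin t → ℕ} (hp : ∀ i, 0 < p i)
  {N₀ : ℕ} (hrep : ∀ n, N₀ ≤ n → (sols p n).Nonempty)
include hp hrep

theorem window_sum_le (k h : ℕ) :
    h * (sols p (k+1)).card ≤ ∑ m ∈ Finset.Ico (k+N₀+1) (k+N₀+h+1), (sols p m).card := by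
  have hcard : (Finset.Ico (k+N₀+1) (k+N₀+h+1)).card = h := by
    rw [Nat.card_Ico]; omega
  calc h * (sols p (k+1)).card
      = ∑ _m ∈ Finset.Ico (k+N₀+1) (k+N₀+h+1), (sols p (k+1)).card := by
        rw [Finset.sum_const, hcard, smul_eq_mul]
    _ ≤ ∑ m ∈ Finset.Ico (k+N₀+1) (k+N₀+h+1), (sols p m).card := by
        apply Finset.sum_le_sum
        intro m hm
        rw [Finset.mem_Ico] at hm
        have h1 : N₀ ≤ m - (k+1) := by omega
        have := card_sols_le_shift hp (hrep _ h1) (k+1)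
        rwa [show k + 1 + (m - (k+1)) = m by omega] at this

theorem le_window_sum (k h : ℕ) :
    ∑ m ∈ Finset.Ico (k+1) (k+h+1), (sols p m).card ≤ h * (sols p (k+N₀+h)).card := by
  have hcard : (Finset.Ico (k+1) (k+h+1)).card = h := by
    rw [Nat.card_Ico]; omega
  calc ∑ m ∈ Finset.Ico (k+1) (k+h+1), (sols p m).card
      ≤ ∑ _m ∈ Finset.Ico (k+1) (k+h+1), (sols p (k+N₀+h)).card := by
        apply Finset.sum_le_sum
        intro m hm
        rw [Finset.mem_Ico] at hm
        have h1 : N₀ ≤ k + N₀ + h - m := by omega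
        have := card_sols_le_shift hp (hrep _ h1) m
        rwa [show m + (k + N₀ + h - m) = k + N₀ + h by omega] at this
    _ = h * (sols p (k+N₀+h)).card := by
        rw [Finset.sum_const, hcard, smul_eq_mul]

theorem phi_split (a b : ℕ) (hab : a ≤ b) :
    (solsLe p a).card + ∑ m ∈ Finset.Ico (a+1) (b+1), (sols p m).card = (solsLe p b).card := by
  rw [card_solsLe_eq_sum hp a, card_solsLe_eq_sum hp b, Finset.range_eq_Ico, Finset.range_eq_Ico]
  exact Finset.sum_Ico_consecutive _ (by omega) (by omega)

theorem window_upper (k h : ℕ) :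
    (∏ i, p i) * (h * (sols p (k+1)).card) + (k + N₀ + t).choose t
      ≤ (k + N₀ + h + (∑ i, (p i - 1)) + t).choose t := by
  calc (∏ i, p i) * (h * (sols p (k+1)).card) + (k + N₀ + t).choose t
      ≤ (∏ i, p i) * (∑ m ∈ Finset.Ico (k+N₀+1) (k+N₀+h+1), (sols p m).card)
          + (∏ i, p i) * (solsLe p (k+N₀)).card := by
        exact Nat.add_le_add (Nat.mul_le_mul_left _ (window_sum_le hp hrep k h))
          (choose_le_Q_mul_card hp (k+N₀))
    _ = (∏ i, p i) * (solsLe p (k+N₀+h)).card := by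
        rw [← Nat.mul_add, Nat.add_comm]
        congr 1
        exact phi_split hp hrep (k+N₀) (k+N₀+h) (by omega)
    _ ≤ (k + N₀ + h + (∑ i, (p i - 1)) + t).choose t := Q_mul_card_le_choose hp _

theorem window_lower (k h : ℕ) :
    (k + h + t).choose t
      ≤ (∏ i, p i) * (h * (sols p (k+N₀+h)).card) + (k + (∑ i, (p i - 1)) + t).choose t := by
  calc (k + h + t).choose t
      ≤ (∏ i, p i) * (solsLe p (k+h)).card := choose_le_Q_mul_card hp _
    _ = (∏ i, p i) * (solsLe p k).card
          + (∏ i, p i) * ∑ m ∈ Finset.Ico (k+1) (k+h+1), (sols p m).card := by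
        rw [← Nat.mul_add]
        congr 1
        exact (phi_split hp hrep k (k+h) (by omega)).symm
    _ ≤ (k + (∑ i, (p i - 1)) + t).choose t
          + (∏ i, p i) * (h * (sols p (k+N₀+h)).card) := by
        exact Nat.add_le_add (Q_mul_card_le_choose hp _)
          (Nat.mul_le_mul_left _ (le_window_sum hp hrep k h))
    _ = (∏ i, p i) * (h * (sols p (k+N₀+h)).card) + (k + (∑ i, (p i - 1)) + t).choose t := by
        rw [Nat.add_comm]

end


theorem tendsto_choose_ratio (c d s : ℕ) :
    Tendsto (fun n : ℕ => ((n + c).choose s : ℝ) * (s.factorial : ℝ) / ((n : ℝ) + d) ^ s)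
      atTop (nhds 1) := by
  have hfac : ∀ i : ℕ, i ∈ Finset.range s →
      Tendsto (fun n : ℕ => ((n : ℝ) + c - i) / ((n : ℝ) + d)) atTop (nhds 1) := by
    intro i _
    have hd : Tendsto (fun n : ℕ => (n : ℝ) + d) atTop atTop :=
      tendsto_atTop_add_const_right atTop (d : ℝ) tendsto_natCast_atTop_atTop
    have h0 : Tendsto (fun n : ℕ => ((c : ℝ) - i - d) / ((n : ℝ) + d)) atTop (nhds 0) :=
      Tendsto.div_atTop tendsto_const_nhds hd
    have h1 : Tendsto (fun n : ℕ => 1 + ((c : ℝ) - i - d) / ((n : ℝ) + d)) atTop (nhds 1) := by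
      have := h0.const_add (1 : ℝ)
      rwa [add_zero] at this
    apply h1.congr'
    filter_upwards [eventually_ge_atTop 1] with n hn
    have hne : (n : ℝ) + d ≠ 0 := by positivity
    field_simp
    ring
  have hprod : Tendsto (fun n : ℕ => ∏ i ∈ Finset.range s, ((n : ℝ) + c - i) / ((n : ℝ) + d))
      atTop (nhds 1) := by
    have := tendsto_finset_prod (f := fun (i : ℕ) (n : ℕ) => ((n : ℝ) + c - i) / ((n : ℝ) + d))
      (x := atTop) (a := fun _ => (1 : ℝ)) (Finset.range s) hfac
    simpa using this
  apply hprod.congr'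
  filter_upwards [eventually_ge_atTop (s + 1)] with n hn
  have hn0 : (0:ℝ) < (n : ℝ) := by exact_mod_cast Nat.lt_of_lt_of_le (Nat.succ_pos s) hn
  have hne : ((n : ℝ) + d) ≠ 0 := by positivity
  have hdesc : ((n + c).choose s : ℝ) * (s.factorial : ℝ)
      = ∏ i ∈ Finset.range s, ((n : ℝ) + c - i) := by
    have h1 : (n + c).descFactorial s = ∏ i ∈ Finset.range s, (n + c - i) :=
      Nat.descFactorial_eq_prod_range (n + c) s
    have h2 : ((n + c).descFactorial s : ℝ) = ((n + c).choose s : ℝ) * (s.factorial : ℝ) := by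
      rw [Nat.descFactorial_eq_factorial_mul_choose]
      push_cast
      ring
    rw [← h2, h1, Nat.cast_prod]
    apply Finset.prod_congr rfl
    intro i hi
    rw [Finset.mem_range] at hi
    have : i ≤ n + c := by omega
    push_cast [Nat.cast_sub this]
    ring
  rw [Finset.prod_div_distrib, ← hdesc]
  congr 1
  rw [Finset.prod_const, Finset.card_range]


end SchurAux

open SchurAux


set_option maxHeartbeats 2000000 in
/-- Schur's theorem on denumerants: for fixed positive integers `p 1, …, p t`
with gcd `1` and `Q = ∏ p j`, the number of nonnegative integer solutions of
`∑ p j * x j = n` is asymptotic to `n^(t-1) / ((t-1)! · Q)` as `n → ∞`. -/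
theorem schur_denumerant (t : ℕ) (ht : 0 < t) (p : Fin t → ℕ)
    (hp : ∀ i, 0 < p i) (hgcd : Finset.univ.gcd p = 1) :
    Tendsto
      (fun n : ℕ =>
        (Nat.card {x : Fin t → ℕ // ∑ i, p i * x i = n} : ℝ) /
          ((n : ℝ) ^ (t - 1) / ((t - 1).factorial * ∏ i, (p i : ℝ))))
      atTop (nhds 1) := by
  obtain ⟨K, rfl⟩ : ∃ K, t = K + 1 := ⟨t - 1, by omega⟩
  set Q : ℕ := ∏ i, p i with hQ
  set P : ℕ := ∑ i, (p i - 1) with hP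
  obtain ⟨N₀, hrep⟩ := exists_rep_threshold hp hgcd
  have hQpos : 0 < Q := Finset.prod_pos fun i _ => hp i
  have hψcard : ∀ n : ℕ, Nat.card {x : Fin (K+1) → ℕ // ∑ i, p i * x i = n}
      = (sols p n).card := by
    intro n
    rw [← Nat.card_eq_finsetCard]
    exact Nat.card_congr (Equiv.subtypeEquivRight fun x => (mem_sols hp).symm)
  have hQcast : (∏ i, (p i : ℝ)) = (Q : ℝ) := by rw [hQ]; push_cast; rfl
  set F : ℕ → ℝ := fun n =>
    ((sols p n).card : ℝ) * (K.factorial : ℝ) * (Q : ℝ) / (n : ℝ) ^ K with hFdef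
  suffices hFt : Tendsto F atTop (nhds 1) by
    apply hFt.congr'
    filter_upwards [eventually_ge_atTop 1] with n hn
    have hn0 : (0:ℝ) < (n:ℝ) := by exact_mod_cast hn
    have hpow : (0:ℝ) < (n:ℝ)^K := by positivity
    have hfc : (0:ℝ) < (K.factorial : ℝ) := by exact_mod_cast K.factorial_pos
    have hQr : (0:ℝ) < (Q:ℝ) := by exact_mod_cast hQpos
    rw [hψcard n, hQcast]
    show ((sols p n).card : ℝ) * (K.factorial : ℝ) * (Q : ℝ) / (n : ℝ) ^ K
      = ((sols p n).card : ℝ) / ((n : ℝ) ^ (K + 1 - 1) / ((K + 1 - 1).factorial * (Q:ℝ)))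
    have hK1 : K + 1 - 1 = K := rfl
    rw [hK1]
    field_simp
  -- ε-argument
  rw [Metric.tendsto_atTop]
  intro ε hε
  obtain ⟨h, hh⟩ := exists_nat_gt ((2 * P) / ε + P)
  have hPh : (P : ℝ) < h := by
    have : (0:ℝ) ≤ 2 * P / ε := by positivity
    linarith
  have hPhN : P < h := by exact_mod_cast hPh
  have hhpos : 0 < h := by omega
  have hhr : (0:ℝ) < (h:ℝ) := by exact_mod_cast hhpos
  have hhalf : (P : ℝ) / h < ε / 2 := by
    rw [div_lt_iff₀ hhr]
    have h2 : 2 * (P:ℝ) / ε < h := by linarith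
    rw [div_lt_iff₀ hε] at h2
    nlinarith
  -- upper comparison
  set g₁ : ℕ → ℝ := fun n => ∑ j ∈ Finset.range (h + P),
    ((n + (N₀ + K + j)).choose K : ℝ) * (K.factorial : ℝ) / ((h : ℝ) * (n : ℝ) ^ K) with hg₁
  have hcomp₁ : ∀ n : ℕ, 1 ≤ n → F n ≤ g₁ n := by
    intro n hn
    obtain ⟨k, rfl⟩ : ∃ k, n = k + 1 := ⟨n - 1, by omega⟩
    have hw := window_upper hp hrep k h
    simp only [← hQ, ← hP] at hw
    have e1 : k + N₀ + h + P + (K+1) = (k + N₀ + (K+1)) + (h + P) := by omega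
    rw [e1, choose_telescope K (k + N₀ + (K+1)) (h+P)] at hw
    have hNat : Q * (h * (sols p (k+1)).card)
        ≤ ∑ j ∈ Finset.range (h + P), ((k+1) + (N₀ + K + j)).choose K := by
      have e2 : ∑ j ∈ Finset.range (h + P), (k + N₀ + (K+1) + j).choose K
          = ∑ j ∈ Finset.range (h + P), ((k+1) + (N₀ + K + j)).choose K := by
        apply Finset.sum_congr rfl
        intro j _
        congr 1
        omega
      omega
    have hNatR : (Q : ℝ) * ((h:ℝ) * ((sols p (k+1)).card : ℝ))
        ≤ ((∑ j ∈ Finset.range (h + P), ((k+1) + (N₀ + K + j)).choose K : ℕ) : ℝ) := by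
      exact_mod_cast hNat
    have hn0 : (0:ℝ) < ((k+1 : ℕ):ℝ) := by positivity
    have heq : g₁ (k+1) = ((∑ j ∈ Finset.range (h + P),
        ((k+1) + (N₀ + K + j)).choose K : ℕ) : ℝ)
          * (K.factorial : ℝ) / ((h : ℝ) * ((k+1 : ℕ) : ℝ) ^ K) := by
      simp only [hg₁]
      push_cast
      rw [Finset.sum_mul, Finset.sum_div]
    rw [heq]
    simp only [hFdef]
    rw [show ((sols p (k+1)).card : ℝ) * (K.factorial : ℝ) * (Q : ℝ) / ((k+1:ℕ) : ℝ) ^ K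
        = (h:ℝ) * (((sols p (k+1)).card : ℝ) * (K.factorial : ℝ) * (Q : ℝ))
          / ((h:ℝ) * ((k+1:ℕ) : ℝ) ^ K) from
      (mul_div_mul_left _ _ (ne_of_gt hhr)).symm]
    rw [div_le_div_iff_of_pos_right (by positivity)]
    nlinarith [mul_le_mul_of_nonneg_right hNatR
      (show (0:ℝ) ≤ (K.factorial : ℝ) by positivity)]
  -- upper limit
  have hg₁t : Tendsto g₁ atTop (nhds (((h:ℝ) + P) / h)) := by
    have heach : ∀ j ∈ Finset.range (h + P), Tendsto
        (fun n : ℕ => ((n + (N₀ + K + j)).choose K : ℝ) * (K.factorial : ℝ)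
          / ((h : ℝ) * (n : ℝ) ^ K)) atTop (nhds (1 / h)) := by
      intro j _
      have hbase := (tendsto_choose_ratio (N₀ + K + j) 0 K).div_const (h : ℝ)
      apply Tendsto.congr' ?_ hbase
      filter_upwards [eventually_ge_atTop 1] with n hn
      rw [Nat.cast_zero, add_zero, div_div, mul_comm ((n:ℝ)^K) ((h:ℝ))]
    have hsum := tendsto_finset_sum (Finset.range (h + P)) heach
    rw [Finset.sum_const, Finset.card_range, nsmul_eq_mul] at hsum
    convert hsum using 2
    push_cast
    ring
  -- lower comparison
  set g₂ : ℕ → ℝ := fun k => ∑ j ∈ Finset.range (h - P),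
    ((k + (P + K + 1 + j)).choose K : ℝ) * (K.factorial : ℝ)
      / ((h : ℝ) * ((k : ℝ) + ((N₀ + h : ℕ) : ℝ)) ^ K) with hg₂
  have hcomp₂ : ∀ k : ℕ, g₂ k ≤ F (k + N₀ + h) := by
    intro k
    have hw := window_lower hp hrep k h
    simp only [← hQ, ← hP] at hw
    have e1 : k + h + (K+1) = (k + P + (K+1)) + (h - P) := by omega
    rw [e1, choose_telescope K (k + P + (K+1)) (h-P)] at hw
    have hNat : ∑ j ∈ Finset.range (h - P), (k + (P + K + 1 + j)).choose K
        ≤ Q * (h * (sols p (k + N₀ + h)).card) := by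
      have e2 : ∑ j ∈ Finset.range (h - P), (k + P + (K+1) + j).choose K
          = ∑ j ∈ Finset.range (h - P), (k + (P + K + 1 + j)).choose K := by
        apply Finset.sum_congr rfl
        intro j _
        congr 1
        omega
      omega
    have hNatR : ((∑ j ∈ Finset.range (h - P), (k + (P + K + 1 + j)).choose K : ℕ) : ℝ)
        ≤ (Q : ℝ) * ((h:ℝ) * ((sols p (k + N₀ + h)).card : ℝ)) := by
      exact_mod_cast hNat
    have hd0 : (0:ℝ) < ((k + N₀ + h : ℕ) : ℝ) := by
      have : 0 < k + N₀ + h := by omega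
      exact_mod_cast this
    have hdcast : ((k + N₀ + h : ℕ) : ℝ) = (k : ℝ) + ((N₀ + h : ℕ) : ℝ) := by push_cast; ring
    have heq : g₂ k = ((∑ j ∈ Finset.range (h - P),
        (k + (P + K + 1 + j)).choose K : ℕ) : ℝ)
          * (K.factorial : ℝ) / ((h : ℝ) * ((k : ℝ) + ((N₀ + h : ℕ) : ℝ)) ^ K) := by
      simp only [hg₂]
      push_cast
      rw [Finset.sum_mul, Finset.sum_div]
    rw [heq]
    simp only [hFdef]
    rw [← hdcast]
    rw [show ((sols p (k+N₀+h)).card : ℝ) * (K.factorial : ℝ) * (Q : ℝ)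
          / ((k+N₀+h:ℕ) : ℝ) ^ K
        = (h:ℝ) * (((sols p (k+N₀+h)).card : ℝ) * (K.factorial : ℝ) * (Q : ℝ))
          / ((h:ℝ) * ((k+N₀+h:ℕ) : ℝ) ^ K) from
      (mul_div_mul_left _ _ (ne_of_gt hhr)).symm]
    rw [div_le_div_iff_of_pos_right (by positivity)]
    nlinarith [mul_le_mul_of_nonneg_right hNatR
      (show (0:ℝ) ≤ (K.factorial : ℝ) by positivity)]
  -- lower limit
  have hg₂t : Tendsto g₂ atTop (nhds (((h:ℝ) - P) / h)) := by
    have heach : ∀ j ∈ Finset.range (h - P), Tendsto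
        (fun k : ℕ => ((k + (P + K + 1 + j)).choose K : ℝ) * (K.factorial : ℝ)
          / ((h : ℝ) * ((k : ℝ) + ((N₀ + h : ℕ) : ℝ)) ^ K)) atTop (nhds (1 / h)) := by
      intro j _
      have hbase := (tendsto_choose_ratio (P + K + 1 + j) (N₀ + h) K).div_const (h : ℝ)
      apply Tendsto.congr' ?_ hbase
      filter_upwards [eventually_ge_atTop 1] with k hk
      rw [div_div, mul_comm (((k:ℝ) + ((N₀ + h : ℕ) : ℝ))^K) ((h:ℝ))]
    have hsum := tendsto_finset_sum (Finset.range (h - P)) heach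
    rw [Finset.sum_const, Finset.card_range, nsmul_eq_mul] at hsum
    convert hsum using 2
    rw [Nat.cast_sub hPhN.le]
    ring
  -- conclude
  have hL₁ : ((h:ℝ) + P) / h < 1 + ε := by
    rw [add_div, div_self (ne_of_gt hhr)]
    linarith
  have hL₂ : 1 - ε < ((h:ℝ) - P) / h := by
    rw [sub_div, div_self (ne_of_gt hhr)]
    linarith
  have hU := hg₁t.eventually_lt_const hL₁
  have hL := hg₂t.eventually_const_lt hL₂
  obtain ⟨N₁, hN₁⟩ := eventually_atTop.mp hU
  obtain ⟨N₂, hN₂⟩ := eventually_atTop.mp hL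
  refine ⟨N₁ + N₂ + N₀ + h + 1, fun n hn => ?_⟩
  have hub : F n < 1 + ε :=
    lt_of_le_of_lt (hcomp₁ n (by omega)) (hN₁ n (by omega))
  have hlb : 1 - ε < F n := by
    set k := n - (N₀ + h) with hk
    have hkN : N₂ ≤ k := by omega
    have hnk : n = k + N₀ + h := by omega
    rw [hnk]
    exact lt_of_lt_of_le (hN₂ k hkN) (hcomp₂ k)
  rw [Real.dist_eq, abs_sub_lt_iff]
  constructor <;> linarith
end

section
/- Let ⟨p_1,...,p_t⟩ be a bad pattern of k (all p_i ≥ 2) and ⟨p_1,...,p_{t−1}, p_t−1, 1⟩ its associated good pattern. The number of cyclic arrangements (forms) per class of the bad pattern is (k−1)!/(p_1!···p_t!), while for the good pattern it is (k−1)!/(p_1!···p_{t−1}!·(p_t−1)!·1!); the ratio of good forms per class to bad forms per class is p_t ≥ 2. -/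
/-- For a bad pattern `⟨p 1, …, p t⟩` of `k` (all multiplicities at least `2`)
and its associated good pattern `⟨p 1, …, p (t-1), p t - 1, 1⟩`, the number of
forms per class, `(k-1)!/(p 1! ⋯ p t!)` for the bad pattern and
`(k-1)!/(p 1! ⋯ p (t-1)! · (p t - 1)! · 1!)` for the good pattern, are in ratio
`p t ≥ 2` (good to bad). -/
theorem forms_per_class_ratio (t k : ℕ) (ht : 0 < t) (p : Fin t → ℕ)
    (hp : ∀ i, 2 ≤ p i) (hk : ∑ i, p i = k) :
    (2 ≤ p ⟨t - 1, by omega⟩) ∧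
    ((k - 1).factorial : ℚ) /
        ((∏ i ∈ Finset.univ.erase (⟨t - 1, by omega⟩ : Fin t),
            ((p i).factorial : ℚ)) *
          ((p ⟨t - 1, by omega⟩ - 1).factorial : ℚ) * (Nat.factorial 1 : ℚ)) =
      (p ⟨t - 1, by omega⟩ : ℚ) *
        (((k - 1).factorial : ℚ) / ∏ i, ((p i).factorial : ℚ)) := by
  set j : Fin t := ⟨t - 1, by omega⟩
  refine ⟨hp j, ?_⟩
  have hsplit : (∏ i, ((p i).factorial : ℚ)) =
      ((p j).factorial : ℚ) * ∏ i ∈ Finset.univ.erase j, ((p i).factorial : ℚ) := by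
    rw [← Finset.mul_prod_erase Finset.univ _ (Finset.mem_univ j)]
  have hfacn : (p j).factorial = (p j) * (p j - 1).factorial := by
    conv_lhs => rw [← Nat.succ_pred_eq_of_pos (by have := hp j; omega : 0 < p j)]
    rw [Nat.factorial_succ]
    have h1 : (p j).pred + 1 = p j := Nat.succ_pred_eq_of_pos (by have := hp j; omega)
    rw [h1]
    rfl
  have hfac : ((p j).factorial : ℚ) = (p j : ℚ) * ((p j - 1).factorial : ℚ) := by
    exact_mod_cast congrArg (Nat.cast : ℕ → ℚ) hfacn
  have hne : ∀ i : Fin t, ((p i).factorial : ℚ) ≠ 0 := fun i => by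
    exact_mod_cast Nat.factorial_ne_zero (p i)
  have herase : (∏ i ∈ Finset.univ.erase j, ((p i).factorial : ℚ)) ≠ 0 :=
    Finset.prod_ne_zero_iff.2 fun i _ => hne i
  have hpj : ((p j - 1).factorial : ℚ) ≠ 0 := by
    exact_mod_cast Nat.factorial_ne_zero _
  have hpj0 : (p j : ℚ) ≠ 0 := by
    have := hp j; positivity
  rw [hsplit, hfac]
  field_simp
  ring
end

section
/- Define κ on classes with t distinct values c_1 < ... < c_{t−1} and largest singleton c_t > 1 (multiplicities p_1,...,p_{t−1},1) by κ(C) = [1, c_1^{p_1}, ..., c_{t−1}^{p_{t−1}−1}; c_t + c_{t−1} − 1]. Then κ preserves the weighted sum Σ p_i c_i = n, and iterating κ at most k−1 times from any awesome class (good class whose largest singleton exceeds 1) reaches the class [1^{k−1}; n−k+1]. -/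
/-- The largest value occurring exactly once in the multiset `M`
(the largest singleton of the class), or `0` if there is none. -/
noncomputable def largestSingleton (M : Multiset ℕ) : ℕ :=
  sSup {v : ℕ | M.count v = 1}

/-- The map `κ` on classes: remove the largest singleton `m` and one copy of the
largest remaining value `c`, and add the entries `1` and `m + c - 1`. -/
noncomputable def kappa (M : Multiset ℕ) : Multiset ℕ :=
  let m := largestSingleton M
  let c := sSup {v : ℕ | v ∈ M.erase m}
  1 ::ₘ (m + c - 1) ::ₘ ((M.erase m).erase c)

lemma kappa_def (M : Multiset ℕ) : kappa M =
    1 ::ₘ (largestSingleton M + sSup {v : ℕ | v ∈ M.erase (largestSingleton M)} - 1) ::ₘ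
      ((M.erase (largestSingleton M)).erase
        (sSup {v : ℕ | v ∈ M.erase (largestSingleton M)})) := rfl

lemma largestSingleton_eq {M : Multiset ℕ} {v : ℕ} (hv : M.count v = 1)
    (hmax : ∀ w ∈ M, M.count w = 1 → w ≤ v) : largestSingleton M = v := by
  apply IsGreatest.csSup_eq
  refine ⟨hv, fun w hw => ?_⟩
  have hw' : M.count w = 1 := hw
  exact hmax w (Multiset.count_pos.mp (by omega)) hw'

lemma terminal_eq {n k : ℕ} {M : Multiset ℕ} {v : ℕ}
    (hcard : Multiset.card M = k) (hsum : M.sum = n) (hvM : v ∈ M) (hv1 : 1 < v)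
    (h1 : ∀ w ∈ M.erase v, w = 1) :
    M = Multiset.replicate (k - 1) 1 + {n - k + 1} := by
  have hcarde : Multiset.card (M.erase v) = k - 1 := by
    rw [Multiset.card_erase_of_mem hvM, hcard, Nat.pred_eq_sub_one]
  have hrep : M.erase v = Multiset.replicate (k - 1) 1 :=
    Multiset.eq_replicate.mpr ⟨hcarde, h1⟩
  have hM : M = v ::ₘ Multiset.replicate (k - 1) 1 := by
    rw [← hrep, Multiset.cons_erase hvM]
  have hk : 1 ≤ k := by
    rw [← hcard]
    exact Multiset.card_pos.mpr (fun h => by simp [h] at hvM)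
  have hsum' : v + (k - 1) = n := by
    rw [hM] at hsum
    simpa [Multiset.sum_replicate] using hsum
  have hv' : n - k + 1 = v := by omega
  rw [hM, hv', add_comm, Multiset.singleton_add]

lemma terminal_of_count {n k : ℕ} {M : Multiset ℕ} {v : ℕ}
    (hcard : Multiset.card M = k) (hsum : M.sum = n) (hvM : v ∈ M) (hv1 : 1 < v)
    (h : k - 1 ≤ M.count 1) :
    M = Multiset.replicate (k - 1) 1 + {n - k + 1} := by
  apply terminal_eq hcard hsum hvM hv1
  have h1 : (M.erase v).count 1 = M.count 1 :=
    Multiset.count_erase_of_ne (by omega) M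
  have hle : (M.erase v).count 1 ≤ Multiset.card (M.erase v) :=
    Multiset.count_le_card 1 _
  have hcarde : Multiset.card (M.erase v) = k - 1 := by
    rw [Multiset.card_erase_of_mem hvM, hcard, Nat.pred_eq_sub_one]
  have heq : (M.erase v).count 1 = Multiset.card (M.erase v) := by omega
  intro w hw
  exact (Multiset.count_eq_card.mp heq w hw).symm

lemma kappa_sum {M : Multiset ℕ} {v : ℕ} (hvc : M.count v = 1) (hv1 : 1 < v)
    (hmax : ∀ w ∈ M, M.count w = 1 → w ≤ v)
    (hpos : ∀ w ∈ M, 0 < w) :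
    (kappa M).sum = M.sum := by
  have hm := largestSingleton_eq hvc hmax
  have hvM : v ∈ M := Multiset.count_pos.mp (by omega)
  by_cases h0 : M.erase v = 0
  · have hMv : M = {v} := by
      have h := Multiset.cons_erase hvM
      rw [h0] at h
      exact h.symm
    have hset : ({x : ℕ | x ∈ M.erase v}) = ∅ := by rw [h0]; simp
    rw [kappa_def, hm, hset, csSup_empty]
    simp [hMv]
    omega
  · have hne : (M.erase v).toFinset.Nonempty := by
      rwa [Multiset.toFinset_nonempty]
    set c := (M.erase v).toFinset.max' hne with hcdef
    have hcmem : c ∈ M.erase v := Multiset.mem_toFinset.mp ((M.erase v).toFinset.max'_mem hne)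
    have hcub : ∀ x ∈ M.erase v, x ≤ c := fun x hx =>
      (M.erase v).toFinset.le_max' x (Multiset.mem_toFinset.mpr hx)
    have hcsup : sSup {x : ℕ | x ∈ M.erase v} = c :=
      IsGreatest.csSup_eq ⟨hcmem, fun x hx => hcub x hx⟩
    have hcpos : 0 < c := hpos c (Multiset.mem_of_mem_erase hcmem)
    have hEc : M.erase v = c ::ₘ (M.erase v).erase c := (Multiset.cons_erase hcmem).symm
    have hMv : M = v ::ₘ c ::ₘ (M.erase v).erase c := by
      conv_lhs => rw [← Multiset.cons_erase hvM, hEc]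
    rw [kappa_def, hm, hcsup]
    conv_rhs => rw [hMv]
    simp [Multiset.sum_cons]
    omega

lemma kappa_aux (n k : ℕ) : ∀ (d : ℕ) (M : Multiset ℕ), Multiset.card M = k → M.sum = n →
    (∀ v ∈ M, 0 < v) →
    (∃ v ∈ M, M.count v = 1 ∧ 1 < v ∧ ∀ w ∈ M, M.count w = 1 → w ≤ v) →
    k - 1 - M.count 1 ≤ d →
    ∃ j ≤ d, kappa^[j] M = Multiset.replicate (k - 1) 1 + {n - k + 1} := by
  intro d
  induction d with
  | zero =>
    rintro M hcard hsum hpos ⟨v, hvM, hvc, hv1, hmax⟩ hd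
    exact ⟨0, le_refl 0, by
      simpa using terminal_of_count hcard hsum hvM hv1 (by omega)⟩
  | succ d ih =>
    rintro M hcard hsum hpos ⟨v, hvM, hvc, hv1, hmax⟩ hd
    by_cases hterm : k - 1 ≤ M.count 1
    · exact ⟨0, Nat.zero_le _, by
        simpa using terminal_of_count hcard hsum hvM hv1 hterm⟩
    push_neg at hterm
    have hm := largestSingleton_eq hvc hmax
    have hk2 : 2 ≤ k := by omega
    have hcardE : Multiset.card (M.erase v) = k - 1 := by
      rw [Multiset.card_erase_of_mem hvM, hcard, Nat.pred_eq_sub_one]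
    have hE : M.erase v ≠ 0 := by
      intro h0
      rw [h0] at hcardE
      simp at hcardE
      omega
    have hne : (M.erase v).toFinset.Nonempty := by
      rwa [Multiset.toFinset_nonempty]
    set c := (M.erase v).toFinset.max' hne with hcdef
    have hcmem : c ∈ M.erase v := Multiset.mem_toFinset.mp ((M.erase v).toFinset.max'_mem hne)
    have hcub : ∀ x ∈ M.erase v, x ≤ c := fun x hx =>
      (M.erase v).toFinset.le_max' x (Multiset.mem_toFinset.mpr hx)
    have hcsup : sSup {x : ℕ | x ∈ M.erase v} = c :=
      IsGreatest.csSup_eq ⟨hcmem, fun x hx => hcub x hx⟩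
    have hcM : c ∈ M := Multiset.mem_of_mem_erase hcmem
    have hcpos : 0 < c := hpos c hcM
    have hc2 : 2 ≤ c := by
      by_contra h
      have hc1 : c = 1 := by omega
      have hall : ∀ w ∈ M.erase v, w = 1 := fun w hw =>
        le_antisymm (hc1 ▸ hcub w hw) (hpos w (Multiset.mem_of_mem_erase hw))
      have h1 : (M.erase v).count 1 = Multiset.card (M.erase v) :=
        Multiset.count_eq_card.mpr (fun b hb => (hall b hb).symm)
      have h2 : (M.erase v).count 1 = M.count 1 :=
        Multiset.count_erase_of_ne (by omega) M
      omega
    set rest := (M.erase v).erase c with hrest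
    have hEc : M.erase v = c ::ₘ rest := (Multiset.cons_erase hcmem).symm
    have hMv : M = v ::ₘ c ::ₘ rest := by
      conv_lhs => rw [← Multiset.cons_erase hvM, hEc]
    have hkM : kappa M = 1 ::ₘ (v + c - 1) ::ₘ rest := by
      rw [kappa_def, hm, hcsup]
    set w0 := v + c - 1 with hw0
    have hw03 : 3 ≤ w0 := by omega
    have hrestle : ∀ x ∈ rest, x ≤ c := fun x hx =>
      hcub x (Multiset.mem_of_mem_erase hx)
    have hrestM : ∀ x ∈ rest, x ∈ M := by
      intro x hx
      rw [hMv]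
      exact Multiset.mem_cons_of_mem (Multiset.mem_cons_of_mem hx)
    have hcard' : Multiset.card (kappa M) = k := by
      rw [hkM]
      rw [hMv] at hcard
      simpa using hcard
    have hsum' : (kappa M).sum = n := by
      rw [hkM]
      rw [hMv] at hsum
      simp [Multiset.sum_cons] at hsum ⊢
      omega
    have hpos' : ∀ x ∈ kappa M, 0 < x := by
      rw [hkM]
      intro x hx
      rcases Multiset.mem_cons.mp hx with h | hx
      · omega
      rcases Multiset.mem_cons.mp hx with h | hx
      · omega
      · exact hpos x (hrestM x hx)
    have hw0notin : w0 ∉ rest := fun h => by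
      have := hrestle _ h; omega
    have hcount' : (kappa M).count w0 = 1 := by
      rw [hkM, Multiset.count_cons_of_ne (by omega), Multiset.count_cons_self,
        Multiset.count_eq_zero.mpr hw0notin]
    have haw' : ∃ x ∈ kappa M, (kappa M).count x = 1 ∧ 1 < x ∧
        ∀ y ∈ kappa M, (kappa M).count y = 1 → y ≤ x := by
      refine ⟨w0, ?_, hcount', by omega, ?_⟩
      · rw [hkM]
        exact Multiset.mem_cons_of_mem (Multiset.mem_cons_self _ _)
      · intro y hy _
        rw [hkM] at hy
        rcases Multiset.mem_cons.mp hy with h | hy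
        · omega
        rcases Multiset.mem_cons.mp hy with h | hy
        · omega
        · have := hrestle y hy; omega
    have hcnt : (kappa M).count 1 = M.count 1 + 1 := by
      rw [hkM]
      conv_rhs => rw [hMv]
      rw [Multiset.count_cons_self, Multiset.count_cons_of_ne (show (1:ℕ) ≠ w0 by omega),
        Multiset.count_cons_of_ne (show (1:ℕ) ≠ v by omega),
        Multiset.count_cons_of_ne (show (1:ℕ) ≠ c by omega)]
    have hd' : k - 1 - (kappa M).count 1 ≤ d := by omega
    obtain ⟨j, hj, hjeq⟩ := ih (kappa M) hcard' hsum' hpos' haw' hd'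
    exact ⟨j + 1, by omega, by rw [Function.iterate_succ_apply]; exact hjeq⟩

/-- `κ` preserves the total sum `n` of a class, and iterating `κ` at most
`k - 1` times from any awesome class (a class whose largest singleton exceeds
`1`) reaches the class `[1^(k-1); n-k+1]`. -/
theorem kappa_reaches_terminal_class (n k : ℕ) (M : Multiset ℕ)
    (hcard : Multiset.card M = k) (hsum : M.sum = n)
    (hpos : ∀ v ∈ M, 0 < v)
    (hawesome : ∃ v ∈ M, M.count v = 1 ∧ 1 < v ∧
      ∀ w ∈ M, M.count w = 1 → w ≤ v) :
    (kappa M).sum = n ∧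
    ∃ j ≤ k - 1, kappa^[j] M =
      Multiset.replicate (k - 1) 1 + {n - k + 1} := by
  obtain ⟨v, hvM, hvc, hv1, hmax⟩ := hawesome
  constructor
  · rw [kappa_sum hvc hv1 hmax hpos, hsum]
  · exact kappa_aux n k (k - 1) M hcard hsum hpos ⟨v, hvM, hvc, hv1, hmax⟩ (by omega)
end
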